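/- Let q be a power of the prime p, and let s, d, r, e be positive integers with s·d = q−1, gcd(r, s) = gcd(e, d) = 1, and d odd. For each integer n ≥ 0 define a_n := Σ_{t=1}^{(d−1)/2} (2·cos(π(2t−1)/d))^n. Suppose 2^s ≡ 1 (mod p) and each a_n is an integer with a_n ≡ a_{n+s} (mod p) for all n ≥ 0. Then every η ∈ μ_{2d} (in a fixed algebraic closure of F_q) satisfies (η + 1/η)^s = 1. -/

import Mathlib

open Polynomial Finset

/-- In characteristic 2, the (2d)-th cyclotomic polynomial equals the d-th (d odd). -/
private lemma aux_cyc_two {K : Type*} [Field K] [CharP K 2] {d : ℕ} (hd : 0 < d)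
    (hodd : Odd d) : cyclotomic (2 * d) K = cyclotomic d K := by
  have h2 : ¬ (2 ∣ d) := by rcases hodd with ⟨k, hk⟩; omega
  have hexp := Polynomial.cyclotomic_expand_eq_cyclotomic_mul Nat.prime_two h2 K
  have hfrob := Polynomial.map_frobenius_expand 2 (Polynomial.cyclotomic d K)
  rw [hexp, Polynomial.map_mul, Polynomial.map_cyclotomic, Polynomial.map_cyclotomic] at hfrob
  have h := mul_right_cancel₀ (Polynomial.cyclotomic_ne_zero d K)
    (hfrob.trans (sq (cyclotomic d K)))
  rw [mul_comm]
  exact h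

/-- Vandermonde argument: if all "power-sum moments" of a vector `c` against distinct
points `w` vanish, then `c = 0`. -/
private lemma aux_vand {K : Type*} [Field K] {m : ℕ} (w : Fin m → K)
    (hw : Function.Injective w) (c : Fin m → K)
    (h : ∀ n : ℕ, ∑ i, w i ^ n * c i = 0) : ∀ i, c i = 0 := by
  have hdet : ((Matrix.vandermonde w).transpose).det ≠ 0 := by
    rw [Matrix.det_transpose, Matrix.det_vandermonde]
    refine Finset.prod_ne_zero_iff.mpr fun i _ => Finset.prod_ne_zero_iff.mpr fun j hj => ?_
    exact sub_ne_zero_of_ne (hw.ne (Finset.mem_Ioi.mp hj).ne')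
  have hmv : (Matrix.vandermonde w).transpose.mulVec c = 0 := by
    funext n
    have := h (n : ℕ)
    simpa [Matrix.mulVec, Matrix.vandermonde_apply, Matrix.transpose_apply, dotProduct]
      using this
  intro i
  exact congrFun (Matrix.eq_zero_of_mulVec_eq_zero hdet hmv) i

/-- Let q = p^⋆ and s, d, r, e > 0 with s·d = q−1, gcd(r, s) = gcd(e, d) = 1, d odd.
Define a_n := Σ_{t=1}^{(d−1)/2} (2·cos(π(2t−1)/d))^n. Suppose 2^s ≡ 1 (mod p) and
each a_n is an integer with a_n ≡ a_{n+s} (mod p). Then every η ∈ μ_{2d} in an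
algebraic closure of F_q satisfies (η + 1/η)^s = 1. -/
theorem stmt_10 {F : Type*} [Field F] [Fintype F] {q p : ℕ} (hq : Fintype.card F = q)
    (hp : p.Prime) [CharP F p]
    {s d r e : ℕ} (hs : 0 < s) (hd : 0 < d) (hr : 0 < r) (he : 0 < e)
    (hsd : s * d = q - 1) (hrs : Nat.gcd r s = 1) (hed : Nat.gcd e d = 1)
    (hodd : Odd d)
    (a : ℕ → ℝ)
    (hadef : ∀ n, a n = ∑ t ∈ Finset.Icc 1 ((d - 1) / 2),
      (2 * Real.cos (Real.pi * (2 * (t : ℝ) - 1) / d)) ^ n)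
    (hps : (2 : ℕ) ^ s ≡ 1 [MOD p])
    (A : ℕ → ℤ) (hA : ∀ n, (A n : ℝ) = a n)
    (hcong : ∀ n, A n ≡ A (n + s) [ZMOD p]) :
    ∀ η : AlgebraicClosure F, η ^ (2 * d) = 1 → (η + 1 / η) ^ s = 1 := by
  classical
  set K := AlgebraicClosure F with hKdef
  haveI hKchar : CharP K p :=
    charP_of_injective_algebraMap (algebraMap F K).injective p
  obtain ⟨k, -, hcard⟩ := FiniteField.card F p
  have hqpk : q = p ^ (k : ℕ) := by rw [← hq, hcard]
  have hq2 : 2 ≤ q := by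
    have h1 : 1 ≤ s * d := Nat.one_le_iff_ne_zero.mpr (by positivity)
    omega
  have hpq : p ∣ q := by
    rw [hqpk]; exact dvd_pow_self p k.2.ne'
  have hpd : ¬ p ∣ d := by
    intro h
    have h1 : p ∣ q - 1 := hsd ▸ Dvd.dvd.mul_left h s
    have h2 : p ∣ q - (q - 1) := Nat.dvd_sub hpq h1
    rw [show q - (q - 1) = 1 by omega] at h2
    exact absurd (Nat.dvd_one.mp h2) hp.one_lt.ne'
  -- parity facts
  have hones : p = 2 ∨ Even s := by
    by_cases h2 : p = 2
    · exact Or.inl h2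
    · right
      have hqodd : Odd q := hqpk ▸ (hp.odd_of_ne_two h2).pow
      have hev : Even (s * d) := by rw [hsd]; exact Nat.Odd.sub_odd hqodd odd_one
      rcases Nat.even_mul.mp hev with h | h
      · exact h
      · exact absurd h (Nat.not_even_iff_odd.mpr hodd)
  have hneg1 : ((-1 : K)) ^ s = 1 := by
    rcases hones with h2 | hse
    · have h0 : ((p : ℕ) : K) = 0 := CharP.cast_eq_zero K p
      rw [h2] at h0
      have : (-1 : K) = 1 := by push_cast at h0; linear_combination -h0
      rw [this, one_pow]
    · exact hse.neg_one_pow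
  have h2s : (2 : K) ^ s = 1 := by
    have hdvd1 : p ∣ 2 ^ s - 1 := (Nat.modEq_iff_dvd' Nat.one_le_two_pow).mp hps.symm
    have h0 : ((2 ^ s - 1 : ℕ) : K) = 0 := (CharP.cast_eq_zero_iff K p _).mpr hdvd1
    rw [Nat.cast_sub Nat.one_le_two_pow] at h0
    push_cast at h0
    linear_combination h0
  obtain ⟨m, hdm⟩ : ∃ m, d = 2 * m + 1 := by rcases hodd with ⟨m0, hm0⟩; exact ⟨m0, by omega⟩
  have hm2 : (d - 1) / 2 = m := by omega
  have ha' : ∀ n, a n = ∑ t ∈ Finset.Icc 1 m,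
      (2 * Real.cos (Real.pi * (2 * (t : ℝ) - 1) / d)) ^ n := by
    intro n; rw [hadef n, hm2]
  have h2d0 : (2 * d) ≠ 0 := by omega
  -- the complex primitive 2d-th root of unity
  set ζ : ℂ := Complex.exp (2 * (Real.pi : ℂ) * Complex.I / ((2 * d : ℕ) : ℂ)) with hζdef
  have hζ : IsPrimitiveRoot ζ (2 * d) := Complex.isPrimitiveRoot_exp (2 * d) h2d0
  -- the integer polynomials encoding the power sums
  set Q : ℕ → Polynomial ℤ := fun n => ∑ t ∈ Finset.Icc 1 m,
    ((Polynomial.X : Polynomial ℤ) ^ (2 * t - 1) + Polynomial.X ^ (2 * d - (2 * t - 1))) ^ n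
    with hQdef
  have hdC : (d : ℂ) ≠ 0 := Nat.cast_ne_zero.mpr (by omega)
  have hterm : ∀ t, 1 ≤ t → t ≤ m →
      ζ ^ (2 * t - 1) + ζ ^ (2 * d - (2 * t - 1)) =
        ((2 * Real.cos (Real.pi * (2 * (t : ℝ) - 1) / d) : ℝ) : ℂ) := by
    intro t ht1 htm
    have hle : 2 * t - 1 ≤ 2 * d := by omega
    set θ : ℝ := Real.pi * (2 * (t : ℝ) - 1) / d with hθ
    have hc1 : ((2 * t - 1 : ℕ) : ℂ) = 2 * (t : ℂ) - 1 := by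
      push_cast [Nat.cast_sub (by omega : 1 ≤ 2 * t)]; ring
    have hc2 : ((2 * d - (2 * t - 1) : ℕ) : ℂ) = 2 * (d : ℂ) - (2 * (t : ℂ) - 1) := by
      push_cast [Nat.cast_sub hle, Nat.cast_sub (by omega : 1 ≤ 2 * t)]; ring
    have h1 : ζ ^ (2 * t - 1) = Complex.exp ((θ : ℂ) * Complex.I) := by
      rw [hζdef, ← Complex.exp_nat_mul]
      congr 1
      rw [hc1, hθ]
      have : ((2 * d : ℕ) : ℂ) = 2 * (d : ℂ) := by push_cast; ring
      rw [this]
      push_cast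
      field_simp
    have h2 : ζ ^ (2 * d - (2 * t - 1)) = Complex.exp (-(θ : ℂ) * Complex.I) := by
      rw [hζdef, ← Complex.exp_nat_mul]
      have harg : ((2 * d - (2 * t - 1) : ℕ) : ℂ) *
          (2 * (Real.pi : ℂ) * Complex.I / ((2 * d : ℕ) : ℂ)) =
          2 * (Real.pi : ℂ) * Complex.I + (-(θ : ℂ) * Complex.I) := by
        rw [hc2, hθ]
        have : ((2 * d : ℕ) : ℂ) = 2 * (d : ℂ) := by push_cast; ring
        rw [this]
        push_cast
        field_simp
        ring
      rw [harg, Complex.exp_add, Complex.exp_two_pi_mul_I, one_mul]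
    rw [h1, h2, Complex.exp_mul_I, Complex.exp_mul_I]
    push_cast [← Complex.ofReal_cos]
    simp [Complex.cos_neg, Complex.sin_neg]
    ring
  have hζQ : ∀ n, Polynomial.aeval ζ (Q n) = ((A n : ℤ) : ℂ) := by
    intro n
    have : Polynomial.aeval ζ (Q n) =
        ∑ t ∈ Finset.Icc 1 m, (ζ ^ (2 * t - 1) + ζ ^ (2 * d - (2 * t - 1))) ^ n := by
      rw [hQdef]
      simp [map_sum]
    rw [this]
    have : ∑ t ∈ Finset.Icc 1 m, (ζ ^ (2 * t - 1) + ζ ^ (2 * d - (2 * t - 1))) ^ n =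
        ∑ t ∈ Finset.Icc 1 m,
          (((2 * Real.cos (Real.pi * (2 * (t : ℝ) - 1) / d) : ℝ) : ℂ)) ^ n := by
      refine Finset.sum_congr rfl fun t ht => ?_
      obtain ⟨ht1, htm⟩ := Finset.mem_Icc.mp ht
      rw [hterm t ht1 htm]
    rw [this]
    have : ((A n : ℝ) : ℂ) = ((A n : ℤ) : ℂ) := by push_cast; ring
    rw [← this, hA n, ha' n]
    push_cast
    ring
  -- divisibility by the cyclotomic polynomial over ℤ
  have hdvd : ∀ n, Polynomial.cyclotomic (2 * d) ℤ ∣ (Q n - Polynomial.C (A n)) := by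
    intro n
    rw [Polynomial.cyclotomic_eq_minpoly hζ (by omega)]
    refine minpoly.isIntegrallyClosed_dvd (hζ.isIntegral (by omega)) ?_
    rw [map_sub, hζQ n, Polynomial.aeval_C]
    simp
  -- pick a root ω of the cyclotomic polynomial in K
  have hdeg : (Polynomial.cyclotomic (2 * d) K).degree ≠ 0 := by
    rw [Polynomial.degree_cyclotomic]
    exact_mod_cast (Nat.totient_pos.mpr (by omega)).ne'
  obtain ⟨ω, hωroot⟩ := IsAlgClosed.exists_root (Polynomial.cyclotomic (2 * d) K) hdeg
  -- the key properties of ω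
  have hωprops : ω ^ (2 * d) = 1 ∧ (∀ j : ℕ, ω ^ (2 * j) = 1 → d ∣ j) ∧ ω ^ d = -1 ∧
      (∀ η : K, η ^ d = -1 → ∃ j : ℕ, η = ω ^ (2 * j + 1)) := by
    by_cases hp2 : p = 2
    · -- characteristic 2
      haveI : CharP K 2 := hp2 ▸ hKchar
      have hneg : ∀ x : K, -x = x := CharTwo.neg_eq
      have hd2 : ¬ (2 : ℕ) ∣ d := by rcases hodd with ⟨k0, hk0⟩; omega
      haveI : NeZero ((d : ℕ) : K) := ⟨by
        rw [Ne, CharP.cast_eq_zero_iff K 2]; exact hd2⟩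
      rw [aux_cyc_two hd hodd] at hωroot
      have hprim : IsPrimitiveRoot ω d := Polynomial.isRoot_cyclotomic_iff.mp hωroot
      have hωd : ω ^ d = 1 := hprim.pow_eq_one
      refine ⟨?_, ?_, ?_, ?_⟩
      · rw [mul_comm, pow_mul, hωd, one_pow]
      · intro j hj
        have := hprim.dvd_of_pow_eq_one _ hj
        have hcop : Nat.Coprime d 2 := by
          rw [Nat.coprime_comm]
          exact (Nat.Prime.coprime_iff_not_dvd Nat.prime_two).mpr hd2
        exact hcop.dvd_of_dvd_mul_left this
      · rw [hωd]; exact (hneg 1).symm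
      · intro η hη
        rw [hneg 1] at hη
        haveI : NeZero d := ⟨by omega⟩
        obtain ⟨i, hi, hie⟩ := hprim.eq_pow_of_pow_eq_one hη
        rcases Nat.even_or_odd i with hev | hod
        · obtain ⟨j0, hj0⟩ := hev
          refine ⟨(i + d - 1) / 2, ?_⟩
          have : 2 * ((i + d - 1) / 2) + 1 = i + d := by omega
          rw [this, pow_add, hωd, mul_one, hie]
        · obtain ⟨j0, hj0⟩ := hod
          exact ⟨j0, by rw [← hie, hj0]⟩
    · -- odd characteristic
      have hp2' : ¬ p ∣ 2 := fun h =>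
        hp2 ((Nat.prime_dvd_prime_iff_eq hp Nat.prime_two).mp h)
      haveI : NeZero (((2 * d : ℕ)) : K) := ⟨by
        rw [Ne, CharP.cast_eq_zero_iff K p]
        exact fun h => (hp.dvd_mul.mp h).elim hp2' hpd⟩
      have hprim : IsPrimitiveRoot ω (2 * d) := Polynomial.isRoot_cyclotomic_iff.mp hωroot
      have hω2d : ω ^ (2 * d) = 1 := hprim.pow_eq_one
      have hm1 : (-1 : K) ≠ 1 := by
        intro h
        have h2K : ((2 : ℕ) : K) = 0 := by push_cast; linear_combination -h
        exact hp2' ((CharP.cast_eq_zero_iff K p 2).mp h2K)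
      have hωd : ω ^ d = -1 := by
        have hsq : (ω ^ d) ^ 2 = 1 := by rw [← pow_mul, mul_comm d 2, hω2d]
        have hfac : (ω ^ d - 1) * (ω ^ d + 1) = 0 := by linear_combination hsq
        rcases mul_eq_zero.mp hfac with h | h
        · exfalso
          have h1 : ω ^ d = 1 := by linear_combination h
          have := hprim.dvd_of_pow_eq_one d h1
          have := Nat.le_of_dvd hd this
          omega
        · linear_combination h
      refine ⟨hω2d, ?_, hωd, ?_⟩
      · intro j hj
        have h1 : 2 * d ∣ 2 * j := hprim.dvd_of_pow_eq_one _ hj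
        obtain ⟨c, hc⟩ := h1
        rw [mul_assoc] at hc
        exact ⟨c, by omega⟩
      · intro η hη
        have hη2 : η ^ (2 * d) = 1 := by
          rw [mul_comm, pow_mul, hη]; rw [neg_one_sq]
        haveI : NeZero (2 * d) := ⟨h2d0⟩
        obtain ⟨i, hi, hie⟩ := hprim.eq_pow_of_pow_eq_one hη2
        rcases Nat.even_or_odd i with hev | hod
        · exfalso
          obtain ⟨j0, hj0⟩ := hev
          have : η ^ d = 1 := by
            rw [← hie, ← pow_mul]
            have : i * d = (2 * d) * j0 := by rw [hj0]; ring
            rw [this, pow_mul, hω2d, one_pow]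
          rw [hη] at this
          exact hm1 this
        · obtain ⟨j0, hj0⟩ := hod
          exact ⟨j0, by rw [← hie, hj0]⟩
  obtain ⟨hω1, hω2, hω3, hω4⟩ := hωprops
  have hω0 : ω ≠ 0 := by
    intro h
    rw [h, zero_pow h2d0] at hω1
    exact zero_ne_one hω1
  -- power sums over K
  have hωQ : ∀ n, ∑ t ∈ Finset.Icc 1 m,
      (ω ^ (2 * t - 1) + ω ^ (2 * d - (2 * t - 1))) ^ n = ((A n : ℤ) : K) := by
    intro n
    obtain ⟨Rp, hRp⟩ := hdvd n
    have h1 := congrArg (Polynomial.aeval ω) hRp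
    rw [map_sub, map_mul, Polynomial.aeval_C] at h1
    have hcyc0 : Polynomial.aeval ω (Polynomial.cyclotomic (2 * d) ℤ) = 0 := by
      rw [Polynomial.aeval_def, Polynomial.eval₂_eq_eval_map, Polynomial.map_cyclotomic]
      exact hωroot
    rw [hcyc0, zero_mul, sub_eq_zero] at h1
    have h2 : Polynomial.aeval ω (Q n) = ∑ t ∈ Finset.Icc 1 m,
        (ω ^ (2 * t - 1) + ω ^ (2 * d - (2 * t - 1))) ^ n := by
      rw [hQdef]; simp [map_sum]
    rw [h2] at h1
    rw [h1]
    simp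
  -- reindex sums over Icc 1 m as sums over Fin m
  have hIcc : Finset.Icc 1 m = Finset.map
      ⟨fun i => i + 1, add_left_injective 1⟩ (Finset.range m) := by
    ext x
    simp only [Finset.mem_Icc, Finset.mem_map, Finset.mem_range,
      Function.Embedding.coeFn_mk]
    constructor
    · rintro ⟨hx1, hx2⟩
      refine ⟨x - 1, by omega, ?_⟩
      beta_reduce
      omega
    · rintro ⟨a0, ha0, rfl⟩
      beta_reduce
      omega
  have hreindex : ∀ f : ℕ → K, ∑ t ∈ Finset.Icc 1 m, f t = ∑ i : Fin m, f ((i : ℕ) + 1) := by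
    intro f
    rw [hIcc, Finset.sum_map]
    simp only [Function.Embedding.coeFn_mk]
    exact (Fin.sum_univ_eq_sum_range (fun i => f (i + 1)) m).symm
  -- the vector of distinct roots
  set w : Fin m → K := fun i => ω ^ (2 * (i : ℕ) + 1) + ω ^ (2 * d - (2 * (i : ℕ) + 1))
    with hwdef
  have hwsum : ∀ n, ∑ i : Fin m, (w i) ^ n = ((A n : ℤ) : K) := by
    intro n
    rw [← hωQ n, hreindex (fun t => (ω ^ (2 * t - 1) + ω ^ (2 * d - (2 * t - 1))) ^ n)]
    refine Finset.sum_congr rfl fun i _ => ?_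
    rw [hwdef]
    congr 2 <;> omega
  have hAeq : ∀ n, ((A (n + s) : ℤ) : K) = ((A n : ℤ) : K) := by
    intro n
    obtain ⟨c, hc⟩ := Int.ModEq.dvd (hcong n)
    have h1 : ((A (n + s) - A n : ℤ) : K) = (((p : ℤ) * c : ℤ) : K) := by rw [hc]
    rw [Int.cast_sub, Int.cast_mul, Int.cast_natCast] at h1
    rw [CharP.cast_eq_zero K p, zero_mul] at h1
    linear_combination h1
  have hmoments : ∀ n : ℕ, ∑ i : Fin m, (w i) ^ n * ((w i) ^ s - 1) = 0 := by
    intro n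
    have h1 : ∑ i : Fin m, (w i) ^ n * ((w i) ^ s - 1) =
        (∑ i : Fin m, (w i) ^ (n + s)) - ∑ i : Fin m, (w i) ^ n := by
      rw [← Finset.sum_sub_distrib]
      refine Finset.sum_congr rfl fun i _ => ?_
      rw [pow_add]; ring
    rw [h1, hwsum, hwsum, hAeq n, sub_self]
  -- injectivity of w
  have hcan : ∀ a b : ℕ, a ≤ b → ω ^ a = ω ^ b → ω ^ (b - a) = 1 := by
    intro a b hab hω
    have h1 : ω ^ (b - a) * ω ^ a = ω ^ a := by
      rw [← pow_add]
      rw [show b - a + a = b by omega, hω]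
    exact mul_right_cancel₀ (pow_ne_zero a hω0) (by rw [h1, one_mul])
  have hwinj : Function.Injective w := by
    intro i j hij
    rw [hwdef] at hij
    simp only at hij
    set u : K := ω ^ (2 * (i : ℕ) + 1) with hu
    set u' : K := ω ^ (2 * (j : ℕ) + 1) with hu'
    have hu0 : u ≠ 0 := pow_ne_zero _ hω0
    have hu0' : u' ≠ 0 := pow_ne_zero _ hω0
    have hUi : ω ^ (2 * d - (2 * (i : ℕ) + 1)) = u⁻¹ := by
      refine (eq_inv_of_mul_eq_one_left ?_)
      rw [hu, ← pow_add]
      rw [show 2 * d - (2 * (i : ℕ) + 1) + (2 * (i : ℕ) + 1) = 2 * d by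
        have := i.2; omega, hω1]
    have hUj : ω ^ (2 * d - (2 * (j : ℕ) + 1)) = u'⁻¹ := by
      refine (eq_inv_of_mul_eq_one_left ?_)
      rw [hu', ← pow_add]
      rw [show 2 * d - (2 * (j : ℕ) + 1) + (2 * (j : ℕ) + 1) = 2 * d by
        have := j.2; omega, hω1]
    rw [hUi, hUj] at hij
    -- hij : u + u⁻¹ = u' + u'⁻¹
    have h3 : (u + u⁻¹) * (u * u') = (u' + u'⁻¹) * (u * u') := by rw [hij]
    have e1 : u⁻¹ * u = 1 := inv_mul_cancel₀ hu0
    have e2 : u'⁻¹ * u' = 1 := inv_mul_cancel₀ hu0'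
    have h4 : u * u * u' + u' = u' * u' * u + u := by
      linear_combination h3 - u' * e1 + u * e2
    have hfac : (u - u') * (u * u' - 1) = 0 := by linear_combination h4
    rcases mul_eq_zero.mp hfac with h5 | h5
    · -- u = u'
      have h6 : u = u' := by linear_combination h5
      rcases le_total (i : ℕ) (j : ℕ) with hle | hle
      · have h7 := hcan _ _ (by omega : 2 * (i : ℕ) + 1 ≤ 2 * (j : ℕ) + 1) (hu ▸ hu' ▸ h6)
        rw [show 2 * (j : ℕ) + 1 - (2 * (i : ℕ) + 1) = 2 * ((j : ℕ) - (i : ℕ)) by omega] at h7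
        have h8 := hω2 _ h7
        have := j.2
        have := i.2
        have h9 : (j : ℕ) - (i : ℕ) < d := by omega
        have h10 : (j : ℕ) - (i : ℕ) = 0 := by
          rcases Nat.eq_zero_or_pos ((j : ℕ) - (i : ℕ)) with h | h
          · exact h
          · exact absurd (Nat.le_of_dvd h h8) (by omega)
        exact Fin.ext (by omega)
      · have h7 := hcan _ _ (by omega : 2 * (j : ℕ) + 1 ≤ 2 * (i : ℕ) + 1)
          (hu ▸ hu' ▸ h6.symm)
        rw [show 2 * (i : ℕ) + 1 - (2 * (j : ℕ) + 1) = 2 * ((i : ℕ) - (j : ℕ)) by omega] at h7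
        have h8 := hω2 _ h7
        have := j.2
        have := i.2
        have h10 : (i : ℕ) - (j : ℕ) = 0 := by
          rcases Nat.eq_zero_or_pos ((i : ℕ) - (j : ℕ)) with h | h
          · exact h
          · exact absurd (Nat.le_of_dvd h h8) (by omega)
        exact Fin.ext (by omega)
    · -- u * u' = 1
      exfalso
      have h6 : ω ^ (2 * ((i : ℕ) + (j : ℕ) + 1)) = 1 := by
        rw [show 2 * ((i : ℕ) + (j : ℕ) + 1) = (2 * (i : ℕ) + 1) + (2 * (j : ℕ) + 1) by omega,
          pow_add, ← hu, ← hu']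
        linear_combination h5
      have h8 := hω2 _ h6
      have := i.2
      have := j.2
      have := Nat.le_of_dvd (by omega) h8
      omega
  -- conclude each w i satisfies (w i)^s = 1
  have hws : ∀ i : Fin m, (w i) ^ s = 1 := by
    intro i
    have := aux_vand w hwinj (fun i => (w i) ^ s - 1) hmoments i
    linear_combination this
  -- key lemma: every η with η^d = -1 satisfies (η + 1/η)^s = 1
  have hkey : ∀ η : K, η ^ d = -1 → (η + 1 / η) ^ s = 1 := by
    intro η hη
    by_cases hη1 : η = -1
    · rw [hη1]
      have : (-1 : K) + 1 / (-1) = (-1) * 2 := by norm_num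
      rw [this, mul_pow, hneg1, h2s, one_mul]
    · obtain ⟨j, hj⟩ := hω4 η hη
      have hred : ∀ n : ℕ, ω ^ n = ω ^ (n % (2 * d)) := by
        intro n
        conv_lhs => rw [← Nat.div_add_mod n (2 * d)]
        rw [pow_add, pow_mul, hω1, one_pow, one_mul]
      set j' : ℕ := (2 * j + 1) % (2 * d) with hj'def
      have hηj' : η = ω ^ j' := by rw [hj, hred]
      have hj'lt : j' < 2 * d := Nat.mod_lt _ (by omega)
      have hj'odd : j' % 2 = 1 := by
        rw [hj'def, Nat.mod_mod_of_dvd _ ⟨d, rfl⟩]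
        omega
      have hj'd : j' ≠ d := by
        intro h
        rw [hηj', h, hω3] at hη1
        exact hη1 rfl
      -- fold j' into range [1, d-2], odd
      obtain ⟨t₀, ht₀odd, ht₀1, ht₀2, hηform⟩ :
          ∃ t₀ : ℕ, t₀ % 2 = 1 ∧ 1 ≤ t₀ ∧ t₀ ≤ d - 2 ∧
            η + 1 / η = ω ^ t₀ + ω ^ (2 * d - t₀) := by
        have hinv : ∀ b : ℕ, b ≤ 2 * d → 1 / (ω ^ b) = ω ^ (2 * d - b) := by
          intro b hb
          rw [one_div]
          symm
          apply eq_inv_of_mul_eq_one_left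
          rw [← pow_add, show 2 * d - b + b = 2 * d by omega, hω1]
        rcases lt_or_gt_of_ne hj'd with hlt | hgt
        · refine ⟨j', hj'odd, by omega, by omega, ?_⟩
          rw [hηj', hinv j' (by omega)]
        · refine ⟨2 * d - j', by omega, by omega, by omega, ?_⟩
          have hη2 : η = ω ^ (2 * d - (2 * d - j')) := by
            rw [show 2 * d - (2 * d - j') = j' by omega]; exact hηj'
          rw [hη2, hinv (2 * d - (2 * d - j')) (by omega)]
          rw [show 2 * d - (2 * d - j') = j' by omega,
            show 2 * d - j' = 2 * d - j' from rfl]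
          ring
      -- t₀ = 2 i + 1 for some i < m
      obtain ⟨i, hi, hti⟩ : ∃ i : ℕ, i < m ∧ t₀ = 2 * i + 1 := ⟨(t₀ - 1) / 2, by omega, by omega⟩
      have : η + 1 / η = w ⟨i, hi⟩ := by
        rw [hηform, hwdef]
        simp only
        congr 2 <;> omega
      rw [this]
      exact hws ⟨i, hi⟩
  -- finish
  intro η hη2d
  have hη0 : η ≠ 0 := by
    intro h
    rw [h, zero_pow h2d0] at hη2d
    exact zero_ne_one hη2d
  have hsq : (η ^ d) ^ 2 = 1 := by rw [← pow_mul, mul_comm d 2]; exact hη2d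
  have hfac : (η ^ d - 1) * (η ^ d + 1) = 0 := by linear_combination hsq
  rcases mul_eq_zero.mp hfac with h | h
  · -- η^d = 1, use -η
    have hηd : η ^ d = 1 := by linear_combination h
    have hnd : (-η) ^ d = -1 := by rw [hodd.neg_pow, hηd]
    have h1 := hkey (-η) hnd
    have h2 : -η + 1 / (-η) = -(η + 1 / η) := by
      rw [div_neg]; ring
    rw [h2, neg_pow] at h1
    rw [hneg1, one_mul] at h1
    exact h1
  · have hηd : η ^ d = -1 := by linear_combination h
    exact hkey η hηd
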